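/- arXiv:1803.10816 — 3 statements merged into one kernel-verified Lean document; each statement's English description precedes it below -/
import Mathlib

section
/- Let n, m be positive integers with m > 1 having prime factorization m = p₁^{s₁}···p_t^{s_t}, and write n = a·b where a is the largest divisor of n coprime to m. Then lim_{k→∞} I(x, n·m^k) = I(x,a) · ∏_{i=1}^{t} p_i^x/(p_i^x − 1). -/
open Finset Nat Filter Topology

/-- Sum of x-th powers of divisors. -/
def sigmaX (x n : ℕ) : ℕ := ∑ d ∈ n.divisors, d ^ x

/-- The x-th abundancy index as a real number. -/
noncomputable def Ir (x n : ℕ) : ℝ := (sigmaX x n : ℝ) / (n : ℝ) ^ x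

lemma sigmaX_eq (x n : ℕ) : sigmaX x n = ArithmeticFunction.sigma x n := by
  simp [sigmaX, ArithmeticFunction.sigma_apply]

lemma Ir_mul (x : ℕ) {u v : ℕ} (h : Nat.Coprime u v) :
    Ir x (u * v) = Ir x u * Ir x v := by
  unfold Ir
  rw [sigmaX_eq, sigmaX_eq, sigmaX_eq,
    ArithmeticFunction.isMultiplicative_sigma.map_mul_of_coprime h,
    Nat.cast_mul, Nat.cast_mul, mul_pow]
  ring

lemma Ir_prod {t : ℕ} (x : ℕ) (g : Fin t → ℕ)
    (h : ∀ i j : Fin t, i ≠ j → Nat.Coprime (g i) (g j)) :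
    Ir x (∏ i, g i) = ∏ i, Ir x (g i) := by
  unfold Ir
  rw [sigmaX_eq,
    ArithmeticFunction.isMultiplicative_sigma.map_prod g Finset.univ
      (fun i _ j _ hij => h i j hij),
    Nat.cast_prod, Nat.cast_prod, ← Finset.prod_pow, ← Finset.prod_div_distrib]
  exact Finset.prod_congr rfl fun i _ => by rw [sigmaX_eq]

lemma Ir_prime_pow (x : ℕ) {q : ℕ} (hq : q.Prime) (e : ℕ) :
    Ir x (q ^ e) = ∑ i ∈ Finset.range (e + 1), (((q : ℝ) ^ x)⁻¹) ^ i := by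
  have hq0 : (0:ℝ) < (q:ℝ) := by exact_mod_cast hq.pos
  have hr0 : ((q:ℝ) ^ x) ≠ 0 := by positivity
  unfold Ir sigmaX
  rw [Nat.sum_divisors_prime_pow hq]
  push_cast
  have key : ∀ i ∈ Finset.range (e + 1),
      (((q : ℝ) ^ x)⁻¹) ^ i = ((q:ℝ) ^ x) ^ (e - i) / ((q:ℝ) ^ x) ^ e := by
    intro i hi
    rw [Finset.mem_range, Nat.lt_succ_iff] at hi
    rw [inv_pow, inv_eq_one_div, div_eq_div_iff (by positivity) (by positivity),
      one_mul, ← pow_add, Nat.sub_add_cancel hi]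
  rw [Finset.sum_congr rfl key, ← Finset.sum_div]
  have : ∑ i ∈ Finset.range (e + 1), ((q:ℝ) ^ x) ^ (e - i)
      = ∑ i ∈ Finset.range (e + 1), ((q:ℝ) ^ x) ^ i := by
    have := Finset.sum_range_reflect (fun i => ((q:ℝ) ^ x) ^ i) (e + 1)
    simpa using this
  rw [this]
  congr 1
  · exact Finset.sum_congr rfl fun i _ => by rw [← pow_mul, mul_comm, pow_mul]
  · rw [← pow_mul, mul_comm, pow_mul]

lemma tendsto_Ir_prime_pow (x : ℕ) (hx : 0 < x) {q : ℕ} (hq : q.Prime) :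
    Tendsto (fun e => Ir x (q ^ e)) atTop
      (𝓝 ((q : ℝ) ^ x / ((q : ℝ) ^ x - 1))) := by
  have hq1 : (1:ℝ) < (q:ℝ) ^ x := by
    have : (1:ℝ) < (q:ℝ) := by exact_mod_cast hq.one_lt
    exact one_lt_pow₀ this hx.ne'
  set r : ℝ := (q:ℝ) ^ x with hr
  have h0 : (0:ℝ) ≤ r⁻¹ := by positivity
  have h1 : r⁻¹ < 1 := inv_lt_one_of_one_lt₀ hq1
  have hsum := (hasSum_geometric_of_lt_one h0 h1).tendsto_sum_nat
  have h2 : (1 - r⁻¹)⁻¹ = r / (r - 1) := by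
    have hr0 : r ≠ 0 := by positivity
    have : 1 - r⁻¹ = (r - 1) / r := by field_simp
    rw [this, inv_div]
  have := hsum.comp (tendsto_add_atTop_nat 1)
  rw [h2] at this
  refine this.congr fun e => ?_
  simp [Function.comp, Ir_prime_pow x hq e, hr]

theorem stmt_5 (x n m t : ℕ) (hx : 0 < x) (hn : 0 < n) (hm : 1 < m)
    (p : Fin t → ℕ) (s : Fin t → ℕ)
    (hp : ∀ i, (p i).Prime) (hinj : Function.Injective p)
    (hs : ∀ i, 0 < s i) (hfac : m = ∏ i, p i ^ s i)
    (a b : ℕ) (hab : n = a * b) (hadvd : a ∣ n) (hcop : Nat.gcd a m = 1)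
    (hmax : ∀ a' : ℕ, a' ∣ n → Nat.gcd a' m = 1 → a' ≤ a) :
    Tendsto (fun k : ℕ => Ir x (n * m ^ k)) atTop
      (𝓝 (Ir x a * ∏ i, (p i : ℝ) ^ x / ((p i : ℝ) ^ x - 1))) := by
  classical
  have hb0 : 0 < b := Nat.pos_of_ne_zero fun h => by simp [hab, h] at hn
  have ha0 : 0 < a := Nat.pos_of_ne_zero fun h => by simp [hab, h] at hn
  -- every prime of b divides m
  have hbm : ∀ q : ℕ, q.Prime → q ∣ b → q ∣ m := by
    intro q hq hqb
    by_contra hqm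
    have hdvd : a * q ∣ n := by
      rw [hab]; exact mul_dvd_mul_left a hqb
    have hco : Nat.gcd (a * q) m = 1 :=
      Nat.Coprime.mul hcop ((Nat.Prime.coprime_iff_not_dvd hq).mpr hqm)
    have := hmax (a * q) hdvd hco
    have h2 := hq.two_le
    nlinarith
  have hcoab : Nat.Coprime a b := by
    by_contra h
    obtain ⟨q, hq, hqd⟩ := Nat.exists_prime_and_dvd h
    have hqa : q ∣ a := hqd.trans (Nat.gcd_dvd_left a b)
    have hqb : q ∣ b := hqd.trans (Nat.gcd_dvd_right a b)
    have hqm : q ∣ m := hbm q hq hqb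
    have : q ∣ Nat.gcd a m := Nat.dvd_gcd hqa hqm
    rw [hcop] at this
    exact hq.one_lt.ne' (Nat.eq_one_of_dvd_one this)
  have hpm : ∀ i, p i ∣ m := fun i => by
    rw [hfac]
    exact dvd_trans (dvd_pow_self (p i) (hs i).ne') (Finset.dvd_prod_of_mem _ (Finset.mem_univ i))
  set e : Fin t → ℕ := fun i => b.factorization (p i) with he
  -- b is supported on the primes p i
  have hb : b = ∏ i, p i ^ e i := by
    have hsub : b.factorization.support ⊆ Finset.image p Finset.univ := by
      intro q hqs
      have hq : q.Prime := Nat.prime_of_mem_primeFactors (by simpa using hqs)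
      have hqb : q ∣ b := Nat.dvd_of_mem_primeFactors (by simpa using hqs)
      have hqm : q ∣ m := hbm q hq hqb
      rw [hfac] at hqm
      obtain ⟨i, _, hqi⟩ := (Prime.dvd_finset_prod_iff hq.prime _).mp hqm
      have : q = p i := (Nat.prime_dvd_prime_iff_eq hq (hp i)).mp (hq.dvd_of_dvd_pow hqi)
      exact Finset.mem_image.mpr ⟨i, Finset.mem_univ i, this.symm⟩
    conv_lhs => rw [← Nat.factorization_prod_pow_eq_self hb0.ne']
    rw [Finsupp.prod]
    rw [Finset.prod_subset hsub (fun q _ hq => by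
      rw [Finsupp.notMem_support_iff.mp hq, pow_zero])]
    rw [Finset.prod_image (fun i _ j _ h => hinj h)]
  -- decomposition of n * m ^ k
  have hbig : ∀ k : ℕ, n * m ^ k = a * ∏ i, p i ^ (e i + k * s i) := by
    intro k
    rw [hab, hfac, mul_assoc]
    congr 1
    rw [hb, ← Finset.prod_pow, ← Finset.prod_mul_distrib]
    exact Finset.prod_congr rfl fun i _ => by rw [← pow_mul, ← pow_add, mul_comm k (s i)]
  have hcopa : ∀ i, Nat.Coprime a (p i) := fun i =>
    Nat.Coprime.coprime_dvd_right (hpm i) hcop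
  have hpair : ∀ (E : Fin t → ℕ) (i j : Fin t), i ≠ j →
      Nat.Coprime (p i ^ E i) (p j ^ E j) := by
    intro E i j hij
    exact Nat.Coprime.pow _ _ ((Nat.coprime_primes (hp i) (hp j)).mpr
      fun h => hij (hinj h))
  have heq : ∀ k : ℕ, Ir x (n * m ^ k)
      = Ir x a * ∏ i, Ir x (p i ^ (e i + k * s i)) := by
    intro k
    rw [hbig k, Ir_mul x, Ir_prod x _ (hpair _)]
    exact Nat.Coprime.prod_right fun i _ => (hcopa i).pow_right _
  simp only [heq]
  apply Tendsto.const_mul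
  apply tendsto_finset_prod
  intro i _
  have hexp : Tendsto (fun k : ℕ => e i + k * s i) atTop atTop := by
    refine tendsto_atTop_mono (fun k => ?_) tendsto_id
    calc k = k * 1 := (mul_one k).symm
      _ ≤ k * s i := Nat.mul_le_mul_left k (hs i)
      _ ≤ e i + k * s i := Nat.le_add_left _ _
  exact (tendsto_Ir_prime_pow x hx (hp i)).comp hexp
end

section
/- Let n = ∏_{i=1}^{s} p_i^{k_i} and let t, x be positive integers with gcd(σ_x(n)+t, n^x) = 1. Suppose there exists j with 1 ≤ j ≤ s such that p_j^x < (1/t)·σ_x(n/p_j^{k_j}), and σ_x(p_j^{k_j}) has a divisor of the form d^x > 1 (d a positive integer) satisfying I(x, p_j^{k_j})·I(x,d) > (σ_x(n)+t)/n^x and gcd(d^x, t) = 1. Then (σ_x(n)+t)/n^x is an x-th abundancy outlaw. -/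
open Finset Nat

/-- The x-th abundancy index as a rational number. -/
def Iq (x n : ℕ) : ℚ := (sigmaX x n : ℚ) / (n : ℚ) ^ x

lemma sigmaX_mul (x : ℕ) {m n : ℕ} (h : Nat.Coprime m n) :
    sigmaX x (m * n) = sigmaX x m * sigmaX x n := by
  have := (ArithmeticFunction.isMultiplicative_sigma (k := x)).map_mul_of_coprime h
  simpa [sigmaX, ArithmeticFunction.sigma_apply] using this

lemma Iq_eq_sum (x : ℕ) {n : ℕ} (hn : 0 < n) :
    Iq x n = ∑ e ∈ n.divisors, ((e : ℚ) ^ x)⁻¹ := by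
  rw [← Nat.sum_div_divisors n (fun d => ((d : ℚ) ^ x)⁻¹), Iq, sigmaX]
  push_cast
  rw [Finset.sum_div]
  refine Finset.sum_congr rfl fun e he => ?_
  obtain ⟨hd, _⟩ := Nat.mem_divisors.mp he
  have he0 : 0 < e := Nat.pos_of_dvd_of_pos hd hn
  have : ((n / e : ℕ) : ℚ) = (n : ℚ) / e := by
    rw [Nat.cast_div hd (by exact_mod_cast he0.ne')]
  rw [this, div_pow, ← one_div, one_div_div]

lemma Iq_le_of_dvd (x : ℕ) {m a : ℕ} (hm : 0 < m) (ha : 0 < a) (h : m ∣ a) :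
    Iq x m ≤ Iq x a := by
  rw [Iq_eq_sum x hm, Iq_eq_sum x ha]
  refine Finset.sum_le_sum_of_subset_of_nonneg (Nat.divisors_subset_of_dvd ha.ne' h) ?_
  intros; positivity

lemma Iq_mul (x : ℕ) {m n : ℕ} (h : Nat.Coprime m n) :
    Iq x (m * n) = Iq x m * Iq x n := by
  rw [Iq, Iq, Iq, sigmaX_mul x h, Nat.cast_mul, Nat.cast_mul, mul_pow]
  exact (div_mul_div_comm _ _ _ _).symm

lemma sigmaX_prime_pow_succ (x : ℕ) {p : ℕ} (hp : p.Prime) (k : ℕ) :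
    sigmaX x (p ^ (k+1)) = p ^ x * sigmaX x (p ^ k) + 1 := by
  have h : ∀ m : ℕ, sigmaX x (p ^ m) = ∑ i ∈ Finset.range (m+1), (p ^ i) ^ x := by
    intro m
    rw [sigmaX, Nat.divisors_prime_pow hp, Finset.sum_map]
    rfl
  rw [h, h, Finset.sum_range_succ']
  rw [Finset.mul_sum]
  simp only [pow_zero, one_pow]
  congr 1
  refine Finset.sum_congr rfl fun i _ => ?_
  rw [← mul_pow, ← pow_succ']

lemma sigmaX_pos (x : ℕ) {n : ℕ} (hn : 0 < n) : 0 < sigmaX x n := by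
  refine Finset.sum_pos (fun d hd => pow_pos (Nat.pos_of_mem_divisors hd) x) ?_
  exact ⟨1, Nat.one_mem_divisors.mpr hn.ne'⟩

theorem stmt_11 (x t s : ℕ) (hx : 0 < x) (ht : 0 < t) (hs : 0 < s)
    (p : Fin s → ℕ) (k : Fin s → ℕ)
    (hp : ∀ i, (p i).Prime) (hinj : Function.Injective p) (hk : ∀ i, 0 < k i)
    (n : ℕ) (hn : n = ∏ i, p i ^ k i)
    (hcop : Nat.gcd (sigmaX x n + t) (n ^ x) = 1)
    (j : Fin s)
    (hpj : (p j : ℚ) ^ x < (1 / (t : ℚ)) * (sigmaX x (n / p j ^ k j) : ℚ))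
    (d : ℕ) (hd1 : 1 < d ^ x) (hddvd : d ^ x ∣ sigmaX x (p j ^ k j))
    (hI : Iq x (p j ^ k j) * Iq x d > (sigmaX x n + t : ℚ) / (n : ℚ) ^ x)
    (hdt : Nat.gcd (d ^ x) t = 1) :
    ¬ ∃ a : ℕ, 0 < a ∧ Iq x a = (sigmaX x n + t : ℚ) / (n : ℚ) ^ x := by
  rintro ⟨a, ha, hIa⟩
  have hpj' := hp j
  set P := p j ^ k j with hP
  set n' : ℕ := ∏ i ∈ Finset.univ.erase j, p i ^ k i with hn'def
  have hfact : n = P * n' := by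
    rw [hn, hn'def, ← Finset.mul_prod_erase _ _ (Finset.mem_univ j)]
  have hcoppn' : Nat.Coprime (p j) n' := by
    apply Nat.Coprime.prod_right
    intro i hi
    have hij : p i ≠ p j := fun hpe => (Finset.mem_erase.mp hi).1 (hinj hpe)
    exact (Nat.coprime_pow_right_iff (hk i) _ _).mpr
      ((Nat.coprime_primes hpj' (hp i)).mpr hij.symm)
  have hcopP : Nat.Coprime P n' := Nat.Coprime.pow_left _ hcoppn'
  -- positivity
  have hn0 : 0 < n := by
    rw [hn]; exact Finset.prod_pos fun i _ => pow_pos (hp i).pos _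
  have hn'0 : 0 < n' := Finset.prod_pos fun i _ => pow_pos (hp i).pos _
  have hP0 : 0 < P := pow_pos hpj'.pos _
  have hd0 : 0 < d := by
    rcases Nat.eq_zero_or_pos d with rfl | h
    · simp [Nat.zero_pow hx] at hd1
    · exact h
  have hnxQ : ((n : ℚ)) ^ x ≠ 0 := by positivity
  have haxQ : ((a : ℚ)) ^ x ≠ 0 := by
    have : (0:ℚ) < a := by exact_mod_cast ha
    positivity
  -- the hypothesis hpj in ℕ form
  have hndiv : n / P = n' := by rw [hfact]; exact Nat.mul_div_cancel_left _ hP0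
  have htp : p j ^ x * t < sigmaX x n' := by
    rw [hndiv] at hpj
    have ht0 : (0:ℚ) < t := by exact_mod_cast ht
    rw [one_div, inv_mul_eq_div, lt_div_iff₀ ht0] at hpj
    exact_mod_cast hpj
  -- the main integral equation
  have hEq : sigmaX x a * n ^ x = (sigmaX x n + t) * a ^ x := by
    rw [Iq] at hIa
    have := (div_eq_div_iff haxQ hnxQ).mp hIa
    exact_mod_cast this
  -- n ∣ a
  have hcopS : Nat.Coprime (sigmaX x n + t) (n ^ x) := hcop
  have hna : n ∣ a := by
    refine (Nat.pow_dvd_pow_iff hx.ne').mp ?_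
    refine Nat.Coprime.dvd_of_dvd_mul_right hcopS.symm ?_
    exact ⟨sigmaX x a, by rw [mul_comm (a ^ x : ℕ), ← hEq, mul_comm]⟩
  obtain ⟨c, rfl⟩ := hna
  have hc0 : 0 < c := Nat.pos_of_ne_zero (fun h => by simp [h] at ha)
  have hEq2 : sigmaX x (n * c) = (sigmaX x n + t) * c ^ x := by
    refine Nat.eq_of_mul_eq_mul_right (pow_pos hn0 x) ?_
    rw [hEq, mul_pow]; ring
  have hσn : sigmaX x n = sigmaX x P * sigmaX x n' := by
    rw [hfact]; exact sigmaX_mul x hcopP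
  -- p j does not divide c
  have hpc : ¬ p j ∣ c := by
    rintro ⟨c', rfl⟩
    have hm : (p j ^ (k j + 1) * n') ∣ n * (p j * c') := by
      rw [hfact, hP]
      exact ⟨c', by ring⟩
    have hm0 : 0 < p j ^ (k j + 1) * n' := mul_pos (pow_pos hpj'.pos _) hn'0
    have key : (sigmaX x n + t) * p j ^ x <
        sigmaX x (p j ^ (k j + 1)) * sigmaX x n' := by
      rw [sigmaX_prime_pow_succ x hpj' (k j), hσn]
      have h1 : (sigmaX x P * sigmaX x n' + t) * p j ^ x
          = p j ^ x * sigmaX x P * sigmaX x n' + p j ^ x * t := by ring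
      have h2 : (p j ^ x * sigmaX x P + 1) * sigmaX x n'
          = p j ^ x * sigmaX x P * sigmaX x n' + sigmaX x n' := by ring
      rw [h1, h2]
      exact Nat.add_lt_add_left htp _
    have hQlt : (sigmaX x n + t : ℚ) / (n : ℚ) ^ x < Iq x (p j ^ (k j + 1) * n') := by
      have hcopP' : Nat.Coprime (p j ^ (k j + 1)) n' := Nat.Coprime.pow_left _ hcoppn'
      have hnxQ' : (0:ℚ) < (n : ℚ) ^ x := by
        have : (0:ℚ) < n := by exact_mod_cast hn0
        positivity
      rw [Iq, sigmaX_mul x hcopP', div_lt_div_iff₀ hnxQ' ?_ ]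
      · have hmQ : ((p j ^ (k j + 1) * n' : ℕ) : ℚ) ^ x
            = (p j : ℚ) ^ x * ((P : ℚ) ^ x * (n' : ℚ) ^ x) := by
          push_cast [hP]
          ring
        have hnQ : ((n : ℚ)) ^ x = (P : ℚ) ^ x * (n' : ℚ) ^ x := by
          rw [hfact]; push_cast; ring
        rw [hmQ, hnQ]
        have keyQ : ((sigmaX x n : ℚ) + t) * (p j : ℚ) ^ x <
            (sigmaX x (p j ^ (k j + 1)) : ℚ) * (sigmaX x n' : ℚ) := by
          exact_mod_cast key
        have hApos : (0:ℚ) < (P : ℚ) ^ x * (n' : ℚ) ^ x := by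
          have h1 : (0:ℚ) < P := by exact_mod_cast hP0
          have h2 : (0:ℚ) < n' := by exact_mod_cast hn'0
          positivity
        have h := mul_lt_mul_of_pos_right keyQ hApos
        convert h using 1
        · push_cast; ring
        · push_cast; ring
      · have : (0:ℚ) < ((p j ^ (k j + 1) * n' : ℕ) : ℚ) := by exact_mod_cast hm0
        positivity
    have hled : Iq x (p j ^ (k j + 1) * n') ≤ Iq x (n * (p j * c')) :=
      Iq_le_of_dvd x hm0 ha hm
    rw [← hIa] at hQlt
    exact absurd (hQlt.trans_le hled) (lt_irrefl _)
  -- now the d argument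
  have hcopPc : Nat.Coprime P (n' * c) :=
    Nat.Coprime.pow_left _
      (hcoppn'.mul_right ((Nat.Prime.coprime_iff_not_dvd hpj').mpr hpc))
  have hσa : sigmaX x (n * c) = sigmaX x P * sigmaX x (n' * c) := by
    rw [hfact, mul_assoc]; exact sigmaX_mul x hcopPc
  have hd_sn : d ^ x ∣ sigmaX x n := hσn ▸ hddvd.mul_right _
  have hcop_dt : Nat.Coprime (d ^ x) (sigmaX x n + t) := by
    obtain ⟨e, he⟩ := hd_sn
    rw [he, add_comm]
    exact (Nat.coprime_add_mul_left_right (d ^ x) t e).mpr hdt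
  have hdc : d ∣ c := by
    refine (Nat.pow_dvd_pow_iff hx.ne').mp ?_
    refine Nat.Coprime.dvd_of_dvd_mul_left hcop_dt ?_
    have h1 : d ^ x ∣ sigmaX x (n * c) := hσa ▸ hddvd.mul_right _
    rw [hEq2] at h1
    exact h1
  have hpd : ¬ p j ∣ d := fun h => hpc (h.trans hdc)
  have hcopPd : Nat.Coprime P d :=
    Nat.Coprime.pow_left _ ((Nat.Prime.coprime_iff_not_dvd hpj').mpr hpd)
  have hmd : P * d ∣ n * c := by
    rw [hfact, mul_assoc]
    exact mul_dvd_mul_left P (hdc.trans (dvd_mul_left c n'))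
  have hfin : (sigmaX x n + t : ℚ) / (n : ℚ) ^ x < Iq x (n * c) :=
    lt_of_lt_of_le (by rw [← Iq_mul x hcopPd] at hI; exact hI)
      (Iq_le_of_dvd x (mul_pos hP0 hd0) ha hmd)
  rw [← hIa] at hfin
  exact absurd hfin (lt_irrefl _)
end

section
/- For every prime p and integer x > 1, the rational I(x, p) = (1 + p^x)/p^x is an abundancy outlaw (i.e., there is no positive integer n with σ(n)/n = (1+p^x)/p^x), yet it is an x-th abundancy index. -/
open Finset Nat

theorem stmt_17 (p x : ℕ) (hp : p.Prime) (hx : 1 < x) :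
    (¬ ∃ n : ℕ, 0 < n ∧ Iq 1 n = ((1 + p ^ x : ℕ) : ℚ) / (p : ℚ) ^ x) ∧
    (∃ n : ℕ, 0 < n ∧ Iq x n = ((1 + p ^ x : ℕ) : ℚ) / (p : ℚ) ^ x) := by
  have hp2 : 2 ≤ p := hp.two_le
  have hppos : 0 < p := hp.pos
  have hpx : 0 < p ^ x := pow_pos hppos x
  have hpxQ : ((p : ℚ)) ^ x ≠ 0 := by positivity
  constructor
  · rintro ⟨n, hn, hEq⟩
    have hnQ : (n : ℚ) ≠ 0 := by exact_mod_cast hn.ne'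
    have key : sigmaX 1 n * p ^ x = (1 + p ^ x) * n := by
      unfold Iq at hEq
      field_simp at hEq
      rw [mul_comm (1 + p ^ x)]
      exact_mod_cast hEq
    have hco : Nat.Coprime (p ^ x) (1 + p ^ x) := by
      exact Nat.coprime_add_self_right.mpr (Nat.coprime_one_right _)
    have hdvd : p ^ x ∣ n := by
      refine hco.dvd_of_dvd_mul_left ⟨sigmaX 1 n, ?_⟩
      rw [← key]; ring
    obtain ⟨m, hm⟩ := hdvd
    have hmpos : 0 < m := by
      rcases Nat.eq_zero_or_pos m with h | h
      · simp [h] at hm; omega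
      · exact h
    have hsig : sigmaX 1 n = (1 + p ^ x) * m := by
      have : sigmaX 1 n * p ^ x = ((1 + p ^ x) * m) * p ^ x := by
        rw [key, hm]; ring
      exact Nat.eq_of_mul_eq_mul_right hpx this
    have hplt : p < p ^ x := by
      calc p = p ^ 1 := (pow_one p).symm
      _ < p ^ x := Nat.pow_lt_pow_right hp.one_lt hx
    have h1 : m < p * m := by nlinarith
    have h2 : p * m < p ^ x * m := by
      exact (Nat.mul_lt_mul_right hmpos).mpr hplt
    have hsub : ({m, p * m, p ^ x * m} : Finset ℕ) ⊆ n.divisors := by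
      intro d hd
      simp only [Finset.mem_insert, Finset.mem_singleton] at hd
      rw [Nat.mem_divisors]
      refine ⟨?_, hn.ne'⟩
      rcases hd with rfl | rfl | rfl
      · exact ⟨p ^ x, by rw [hm]; ring⟩
      · have hx1 : p ^ x = p * p ^ (x - 1) := by
          conv_lhs => rw [show x = (x - 1) + 1 by omega]
          rw [_root_.pow_succ']
        exact ⟨p ^ (x - 1), by rw [hm, hx1]; ring⟩
      · exact ⟨1, by rw [hm]; ring⟩
    have hsum : ∑ d ∈ ({m, p * m, p ^ x * m} : Finset ℕ), d ^ 1 ≤ sigmaX 1 n := by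
      exact Finset.sum_le_sum_of_subset hsub
    rw [Finset.sum_insert (by simp; omega), Finset.sum_insert (by simp; omega),
      Finset.sum_singleton] at hsum
    simp only [pow_one] at hsum
    rw [hsig] at hsum
    nlinarith
  · refine ⟨p, hppos, ?_⟩
    have hdiv : sigmaX x p = 1 + p ^ x := by
      unfold sigmaX
      rw [hp.divisors, Finset.sum_insert (by simp [hp.one_lt.ne]), Finset.sum_singleton,
        one_pow]
    unfold Iq
    rw [hdiv]
end
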